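/- Fix constants k and T with 0 < k < 1 and T > 0, and let α_k(t) = 1 + kt. Let v : ℝ² → ℝ be twice continuously differentiable on Q = (0,1) × (0,T) and satisfy on Q the equation ∂²v/∂t² − ((1 − k²y²)/α_k(t)²)·∂²v/∂y² + (2k²y/α_k(t)²)·∂v/∂y − (2ky/α_k(t))·∂²v/∂y∂t = 0. Define u(x,t) := v(x/α_k(t), t). Then u is twice continuously differentiable on the non-cylindrical domain Q̂ = {(x,t) : 0 < x < α_k(t), 0 < t < T} and satisfies the wave equation ∂²u/∂t² − ∂²u/∂x² = 0 on Q̂. -/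

import Mathlib

open ContinuousLinearMap

private lemma clm_eval (L : ℝ×ℝ →L[ℝ] ℝ) (s t : ℝ) : L (s,t) = s * L (1,0) + t * L (0,1) := by
  have h : ((s,t) : ℝ×ℝ) = s • ((1:ℝ),(0:ℝ)) + t • ((0:ℝ),(1:ℝ)) := by
    simp [Prod.smul_mk, Prod.mk_add_mk]
  rw [h, map_add, map_smul, map_smul, smul_eq_mul, smul_eq_mul]

private lemma clm2_eval (L : ℝ×ℝ →L[ℝ] (ℝ×ℝ →L[ℝ] ℝ)) (s t s' t' : ℝ) :
    L (s,t) (s',t') = s*s'*(L (1,0) (1,0)) + s*t'*(L (1,0) (0,1))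
      + t*s'*(L (0,1) (1,0)) + t*t'*(L (0,1) (0,1)) := by
  have h : ((s,t) : ℝ×ℝ) = s • ((1:ℝ),(0:ℝ)) + t • ((0:ℝ),(1:ℝ)) := by
    simp [Prod.smul_mk, Prod.mk_add_mk]
  rw [h, map_add, map_smul, map_smul]
  rw [ContinuousLinearMap.add_apply, ContinuousLinearMap.smul_apply,
    ContinuousLinearMap.smul_apply, clm_eval (L (1,0)) s' t', clm_eval (L (0,1)) s' t',
    smul_eq_mul, smul_eq_mul]
  ring

set_option maxHeartbeats 2000000 in
theorem stmt_2 (k T : ℝ) (hk0 : 0 < k) (hk1 : k < 1) (hT : 0 < T)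
    (α : ℝ → ℝ) (hα : ∀ t, α t = 1 + k * t)
    (Qhat Q : Set (ℝ × ℝ))
    (hQhat : Qhat = {p : ℝ × ℝ | 0 < p.1 ∧ p.1 < α p.2 ∧ 0 < p.2 ∧ p.2 < T})
    (hQ : Q = Set.Ioo (0 : ℝ) 1 ×ˢ Set.Ioo (0 : ℝ) T)
    (v : ℝ × ℝ → ℝ)
    (hv : ContDiffOn ℝ 2 v Q)
    (heq : ∀ p ∈ Q,
      fderiv ℝ (fun q => fderiv ℝ v q (0, 1)) p (0, 1)
        - ((1 - k ^ 2 * p.1 ^ 2) / (α p.2) ^ 2) *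
            fderiv ℝ (fun q => fderiv ℝ v q (1, 0)) p (1, 0)
        + (2 * k ^ 2 * p.1 / (α p.2) ^ 2) * fderiv ℝ v p (1, 0)
        - (2 * k * p.1 / α p.2) *
            fderiv ℝ (fun q => fderiv ℝ v q (1, 0)) p (0, 1) = 0)
    (u : ℝ × ℝ → ℝ)
    (hu : ∀ p : ℝ × ℝ, u p = v (p.1 / α p.2, p.2)) :
    ContDiffOn ℝ 2 u Qhat ∧
    ∀ p ∈ Qhat,
      fderiv ℝ (fun q => fderiv ℝ u q (0, 1)) p (0, 1)
        - fderiv ℝ (fun q => fderiv ℝ u q (1, 0)) p (1, 0) = 0 := by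
  simp only [hα] at hQhat hu heq
  subst hQhat hQ
  set S : Set (ℝ × ℝ) := {p : ℝ × ℝ | 0 < p.1 ∧ p.1 < 1 + k * p.2 ∧ 0 < p.2 ∧ p.2 < T} with hSdef
  set φ : ℝ × ℝ → ℝ × ℝ := fun q => (q.1 * (1 + k * q.2)⁻¹, q.2) with hφdef
  -- positivity of 1 + k q.2 on S
  have hapos : ∀ q ∈ S, (0:ℝ) < 1 + k * q.2 := fun q hq => lt_trans hq.1 hq.2.1
  -- u = v ∘ φ
  have hufun : u = fun q => v (φ q) := by
    funext q
    rw [hu q, hφdef]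
    simp [div_eq_mul_inv]
  -- φ maps S into the cylinder
  have hmaps : Set.MapsTo φ S (Set.Ioo (0:ℝ) 1 ×ˢ Set.Ioo (0:ℝ) T) := by
    intro q hq
    have ha := hapos q hq
    refine ⟨⟨mul_pos hq.1 (inv_pos.mpr ha), ?_⟩, hq.2.2.1, hq.2.2.2⟩
    show q.1 * (1 + k * q.2)⁻¹ < 1
    rw [← div_eq_mul_inv, div_lt_one ha]
    exact hq.2.1
  -- openness
  have hSopen : IsOpen S := by
    have h1 : IsOpen {p : ℝ×ℝ | 0 < p.1} := isOpen_lt continuous_const continuous_fst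
    have h2 : IsOpen {p : ℝ×ℝ | p.1 < 1 + k * p.2} :=
      isOpen_lt continuous_fst (continuous_const.add (continuous_const.mul continuous_snd))
    have h3 : IsOpen {p : ℝ×ℝ | 0 < p.2} := isOpen_lt continuous_const continuous_snd
    have h4 : IsOpen {p : ℝ×ℝ | p.2 < T} := isOpen_lt continuous_snd continuous_const
    have : S = {p : ℝ×ℝ | 0 < p.1} ∩ ({p : ℝ×ℝ | p.1 < 1 + k * p.2} ∩
        ({p : ℝ×ℝ | 0 < p.2} ∩ {p : ℝ×ℝ | p.2 < T})) := by
      ext p; simp [hSdef, Set.mem_setOf_eq, and_assoc]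
    rw [this]
    exact h1.inter (h2.inter (h3.inter h4))
  have hQopen : IsOpen (Set.Ioo (0:ℝ) 1 ×ˢ Set.Ioo (0:ℝ) T) := isOpen_Ioo.prod isOpen_Ioo
  -- C² of φ on S, hence of u
  have hφcd : ContDiffOn ℝ 2 φ S := by
    apply ContDiffOn.prodMk
    · exact contDiff_fst.contDiffOn.mul
        ((contDiffOn_const.add (contDiffOn_const.mul contDiff_snd.contDiffOn)).inv
          (fun q hq => ne_of_gt (hapos q hq)))
    · exact contDiff_snd.contDiffOn
  have hucd : ContDiffOn ℝ 2 u S := by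
    rw [hufun]
    exact (hv.comp hφcd hmaps)
  refine ⟨hucd, ?_⟩
  -- the wave equation
  intro p hp
  have ha : (0:ℝ) < 1 + k * p.2 := hapos p hp
  have hane : (1 + k * p.2) ≠ 0 := ne_of_gt ha
  have hz : φ p ∈ Set.Ioo (0:ℝ) 1 ×ˢ Set.Ioo (0:ℝ) T := hmaps hp
  -- differentiability of v and its derivative at z := φ p
  have hvz : ContDiffAt ℝ 2 v (φ p) := hv.contDiffAt (hQopen.mem_nhds hz)
  have hdvz : ContDiffAt ℝ 1 (fderiv ℝ v) (φ p) := hvz.fderiv_right (by norm_num)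
  have hB' : DifferentiableAt ℝ (fderiv ℝ v) (φ p) := hdvz.differentiableAt one_ne_zero
  -- first derivatives of u on S
  have hval : ∀ q ∈ S, fderiv ℝ u q (1,0)
        = (1 + k * q.2)⁻¹ * fderiv ℝ v (φ q) (1,0)
      ∧ fderiv ℝ u q (0,1)
        = q.1 * (-k * (((1 + k * q.2)^2)⁻¹)) * fderiv ℝ v (φ q) (1,0)
          + fderiv ℝ v (φ q) (0,1) := by
    intro q hq
    have haq : (0:ℝ) < 1 + k * q.2 := hapos q hq
    have hinv : HasDerivAt (fun s : ℝ => (1 + k*s)⁻¹) (-(k*1) / (1+k*q.2)^2) q.2 :=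
      (((hasDerivAt_id q.2).const_mul k).const_add 1).inv (ne_of_gt haq)
    have hinv' : HasFDerivAt (fun r : ℝ×ℝ => (1 + k*r.2)⁻¹)
        ((-(k*1) / (1+k*q.2)^2) • snd ℝ ℝ ℝ) q := hinv.comp_hasFDerivAt q hasFDerivAt_snd
    have hmul : HasFDerivAt (fun r : ℝ×ℝ => r.1 * (1+k*r.2)⁻¹)
        (q.1 • ((-(k*1)/(1+k*q.2)^2) • snd ℝ ℝ ℝ) + (1+k*q.2)⁻¹ • fst ℝ ℝ ℝ) q :=
      hasFDerivAt_fst.mul hinv'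
    have hφq : HasFDerivAt φ
        ((q.1 • ((-(k*1)/(1+k*q.2)^2) • snd ℝ ℝ ℝ) + (1+k*q.2)⁻¹ • fst ℝ ℝ ℝ).prod (snd ℝ ℝ ℝ)) q :=
      hmul.prodMk hasFDerivAt_snd
    have hvq : DifferentiableAt ℝ v (φ q) :=
      (hv.contDiffAt (hQopen.mem_nhds (hmaps hq))).differentiableAt (by norm_num)
    have huq : HasFDerivAt u ((fderiv ℝ v (φ q)).comp
        ((q.1 • ((-(k*1)/(1+k*q.2)^2) • snd ℝ ℝ ℝ) + (1+k*q.2)⁻¹ • fst ℝ ℝ ℝ).prod (snd ℝ ℝ ℝ))) q := by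
      rw [hufun]
      exact hvq.hasFDerivAt.comp q hφq
    rw [huq.fderiv]
    constructor
    · simp only [ContinuousLinearMap.comp_apply, ContinuousLinearMap.prod_apply,
        ContinuousLinearMap.add_apply, ContinuousLinearMap.smul_apply,
        ContinuousLinearMap.coe_fst', ContinuousLinearMap.coe_snd', smul_eq_mul]
      rw [clm_eval]
      ring
    · simp only [ContinuousLinearMap.comp_apply, ContinuousLinearMap.prod_apply,
        ContinuousLinearMap.add_apply, ContinuousLinearMap.smul_apply,
        ContinuousLinearMap.coe_fst', ContinuousLinearMap.coe_snd', smul_eq_mul]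
      rw [clm_eval]
      ring
  -- eventual equality of first derivatives near p
  have ev1 : (fun q => fderiv ℝ u q (1,0)) =ᶠ[nhds p]
      (fun q : ℝ×ℝ => (1 + k * q.2)⁻¹ * fderiv ℝ v (φ q) (1,0)) := by
    filter_upwards [hSopen.mem_nhds hp] with q hq
    exact (hval q hq).1
  have ev2 : (fun q => fderiv ℝ u q (0,1)) =ᶠ[nhds p]
      (fun q : ℝ×ℝ => q.1 * (-k * (((1 + k * q.2)^2)⁻¹)) * fderiv ℝ v (φ q) (1,0)
          + fderiv ℝ v (φ q) (0,1)) := by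
    filter_upwards [hSopen.mem_nhds hp] with q hq
    exact (hval q hq).2
  -- building blocks at p
  have hinv : HasDerivAt (fun s : ℝ => (1 + k*s)⁻¹) (-(k*1) / (1+k*p.2)^2) p.2 :=
    (((hasDerivAt_id p.2).const_mul k).const_add 1).inv hane
  have hinv' : HasFDerivAt (fun r : ℝ×ℝ => (1 + k*r.2)⁻¹)
      ((-(k*1) / (1+k*p.2)^2) • snd ℝ ℝ ℝ) p := hinv.comp_hasFDerivAt p hasFDerivAt_snd
  have hmul : HasFDerivAt (fun r : ℝ×ℝ => r.1 * (1+k*r.2)⁻¹)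
      (p.1 • ((-(k*1)/(1+k*p.2)^2) • snd ℝ ℝ ℝ) + (1+k*p.2)⁻¹ • fst ℝ ℝ ℝ) p :=
    hasFDerivAt_fst.mul hinv'
  have hφp : HasFDerivAt φ
      ((p.1 • ((-(k*1)/(1+k*p.2)^2) • snd ℝ ℝ ℝ) + (1+k*p.2)⁻¹ • fst ℝ ℝ ℝ).prod (snd ℝ ℝ ℝ)) p :=
    hmul.prodMk hasFDerivAt_snd
  have hw : HasDerivAt (fun s : ℝ => -k * ((1+k*s)^2)⁻¹)
      (-k * (-((2:ℝ) * (1+k*p.2)^(2-1) * (k*1)) / ((1+k*p.2)^2)^2)) p.2 :=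
    (((((hasDerivAt_id p.2).const_mul k).const_add 1).pow 2).inv (pow_ne_zero _ hane)).const_mul (-k)
  have hw' : HasFDerivAt (fun r : ℝ×ℝ => -k * ((1+k*r.2)^2)⁻¹)
      ((-k * (-((2:ℝ) * (1+k*p.2)^(2-1) * (k*1)) / ((1+k*p.2)^2)^2)) • snd ℝ ℝ ℝ) p :=
    hw.comp_hasFDerivAt p hasFDerivAt_snd
  have hc : HasFDerivAt (fun r : ℝ×ℝ => r.1 * (-k * ((1+k*r.2)^2)⁻¹))
      (p.1 • ((-k * (-((2:ℝ) * (1+k*p.2)^(2-1) * (k*1)) / ((1+k*p.2)^2)^2)) • snd ℝ ℝ ℝ)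
        + (-k * ((1+k*p.2)^2)⁻¹) • fst ℝ ℝ ℝ) p :=
    hasFDerivAt_fst.mul hw'
  have hDv : HasFDerivAt (fun q => fderiv ℝ v (φ q))
      ((fderiv ℝ (fderiv ℝ v) (φ p)).comp
        ((p.1 • ((-(k*1)/(1+k*p.2)^2) • snd ℝ ℝ ℝ) + (1+k*p.2)⁻¹ • fst ℝ ℝ ℝ).prod (snd ℝ ℝ ℝ))) p :=
    hB'.hasFDerivAt.comp p hφp
  have hF1 := hDv.clm_apply (hasFDerivAt_const ((1:ℝ),(0:ℝ)) p)
  have hF2 := hDv.clm_apply (hasFDerivAt_const ((0:ℝ),(1:ℝ)) p)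
  have d1 : fderiv ℝ (fun q : ℝ×ℝ => (1 + k * q.2)⁻¹ * fderiv ℝ v (φ q) (1,0)) p = _ :=
    (hinv'.mul hF1).fderiv
  have d2 : fderiv ℝ (fun q : ℝ×ℝ => q.1 * (-k * (((1 + k * q.2)^2)⁻¹)) * fderiv ℝ v (φ q) (1,0)
      + fderiv ℝ v (φ q) (0,1)) p = _ := ((hc.mul hF1).add hF2).fderiv
  -- second derivative symmetry and directional second derivatives of v
  have h2nd : ∀ e e' : ℝ×ℝ, fderiv ℝ (fun q => fderiv ℝ v q e) (φ p) e'
      = fderiv ℝ (fderiv ℝ v) (φ p) e' e := by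
    intro e e'
    have h := fderiv_clm_apply (𝕜 := ℝ) hB' (differentiableAt_const e)
    rw [show (fun q => fderiv ℝ v q e) = (fun y => (fderiv ℝ v y) ((fun _ => e) y)) from rfl, h]
    simp
  obtain ⟨B11,B12,B21,B22,hB⟩ : ∃ b11 b12 b21 b22 : ℝ, ∀ s t s' t' : ℝ,
      fderiv ℝ (fderiv ℝ v) (φ p) (s,t) (s',t') = s*s'*b11 + s*t'*b12 + t*s'*b21 + t*t'*b22 :=
    ⟨_, _, _, _, fun s t s' t' => clm2_eval _ s t s' t'⟩
  obtain ⟨V1,V2,hV⟩ : ∃ c1 c2 : ℝ, ∀ s t : ℝ, fderiv ℝ v (φ p) (s,t) = s*c1 + t*c2 :=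
    ⟨_, _, fun s t => clm_eval _ s t⟩
  have hsymm := (hvz.isSymmSndFDerivAt (by simp [minSmoothness_of_isRCLikeNormedField])).eq (1,0) (0,1)
  rw [hB, hB] at hsymm
  have heqz := heq (φ p) hz
  simp only [h2nd, hB, hV] at heqz
  simp only [hφdef] at heqz
  rw [ev2.fderiv_eq, ev1.fderiv_eq, d2, d1]
  simp only [ContinuousLinearMap.add_apply, ContinuousLinearMap.smul_apply,
    ContinuousLinearMap.comp_apply, ContinuousLinearMap.flip_apply,
    ContinuousLinearMap.prod_apply, ContinuousLinearMap.coe_fst',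
    ContinuousLinearMap.coe_snd', ContinuousLinearMap.zero_apply, smul_eq_mul,
    map_zero]
  simp only [hB, hV]
  norm_num
  try simp only [hsymm]
  field_simp at heqz ⊢
  linear_combination heqz - p.1 * k * (1 + k * p.2)^2 * hsymm
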